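/- Let p be an odd prime, t ≥ 1, and let a be an integer with gcd(a,p) = 1. If the Legendre symbol (a/p) = −1, then #S''_2(a;p^t) = 0. If (a/p) = 1, then #S''_2(a;p^t) = p^{t−1}/(p+1) + 3/2 + (−1)^{t−1}(p−1)/(2(p+1)). -/

import Mathlib

/-- `u` is a square modulo `N`. -/
def IsSquareMod (u : ℤ) (N : ℕ) : Prop := ∃ x : ℤ, x ^ 2 ≡ u [ZMOD (N : ℤ)]

/-- `S''_2(a;p^t)`: residues `k mod p^t` with `k² - a` a square mod `p^t` and `p ∣ (k² - a)`. -/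
def S2'' (a : ℤ) (p t : ℕ) : Set (ZMod (p ^ t)) :=
  {s | ∃ k : ℤ, s = (k : ZMod (p ^ t)) ∧ IsSquareMod (k ^ 2 - a) (p ^ t) ∧
    (p : ℤ) ∣ (k ^ 2 - a)}

open Finset

open scoped Classical in
/-- solutions of n^2 ≡ a mod p^j among n < N -/
noncomputable def sols (p : ℕ) (a : ℤ) (j N : ℕ) : Finset ℕ :=
  (Finset.range N).filter (fun n => ((p : ℤ))^j ∣ (n : ℤ)^2 - a)

section Chunk1
variable (p : ℕ) [hp : Fact p.Prime]

lemma card_QR (hp2 : p ≠ 2) :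
    2 * (Finset.univ.filter (fun z : ZMod p => quadraticChar (ZMod p) z = 1)).card = p - 1 := by
  classical
  have hchar : ringChar (ZMod p) ≠ 2 := (ZMod.ringChar_zmod_n p).symm ▸ hp2
  have hsum := quadraticChar_sum_zero hchar
  have hdisj : Disjoint (Finset.univ.filter (fun z : ZMod p => quadraticChar (ZMod p) z = 1))
      (Finset.univ.filter (fun z : ZMod p => quadraticChar (ZMod p) z = -1)) := by
    rw [Finset.disjoint_filter]
    intro x _ h1 h2
    rw [h1] at h2; norm_num at h2
  have hunion : (Finset.univ.filter (fun z : ZMod p => quadraticChar (ZMod p) z = 1))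
      ∪ (Finset.univ.filter (fun z : ZMod p => quadraticChar (ZMod p) z = -1))
      = Finset.univ.filter (fun z : ZMod p => z ≠ 0) := by
    ext z
    simp only [Finset.mem_union, Finset.mem_filter, Finset.mem_univ, true_and]
    constructor
    · rintro (h | h) rfl <;> simp [quadraticChar_zero] at h
    · intro hz; exact quadraticChar_dichotomy hz
  have hcardAB : (Finset.univ.filter (fun z : ZMod p => quadraticChar (ZMod p) z = 1)).card
      + (Finset.univ.filter (fun z : ZMod p => quadraticChar (ZMod p) z = -1)).card = p - 1 := by
    rw [← Finset.card_union_of_disjoint hdisj, hunion, Finset.filter_ne',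
      Finset.card_erase_of_mem (Finset.mem_univ _), Finset.card_univ, ZMod.card]
  have hsplit : (0 : ℤ) = ((Finset.univ.filter
        (fun z : ZMod p => quadraticChar (ZMod p) z = 1)).card : ℤ)
      - ((Finset.univ.filter (fun z : ZMod p => quadraticChar (ZMod p) z = -1)).card : ℤ) := by
    rw [← hsum]
    have : ∑ z : ZMod p, quadraticChar (ZMod p) z
        = ∑ z ∈ Finset.univ.filter (fun z : ZMod p => z ≠ 0), quadraticChar (ZMod p) z := by
      refine (Finset.sum_filter_of_ne ?_).symm
      rintro x _ hx rfl
      exact hx quadraticChar_zero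
    rw [this, ← hunion, Finset.sum_union hdisj,
      Finset.sum_congr rfl (fun z hz => (Finset.mem_filter.mp hz).2),
      Finset.sum_congr (rfl : (Finset.univ.filter
        (fun z : ZMod p => quadraticChar (ZMod p) z = -1)) = _)
        (fun z hz => (Finset.mem_filter.mp hz).2),
      Finset.sum_const, Finset.sum_const, nsmul_eq_mul, nsmul_eq_mul, mul_one, mul_neg_one]
    ring
  omega

end Chunk1

open Finset

lemma mem_sols {p : ℕ} {a : ℤ} {j N n : ℕ} :
    n ∈ sols p a j N ↔ n < N ∧ ((p : ℤ))^j ∣ (n : ℤ)^2 - a := by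
  classical
  simp [sols]

lemma dvd_sq_sub_congr {M m n a : ℤ} (h : m ≡ n [ZMOD M]) :
    M ∣ m^2 - a ↔ M ∣ n^2 - a := by
  have h2 : m^2 - a ≡ n^2 - a [ZMOD M] := (h.pow 2).sub_right a
  constructor
  · intro hd
    exact Int.modEq_zero_iff_dvd.mp (h2.symm.trans (Int.modEq_zero_iff_dvd.mpr hd))
  · intro hd
    exact Int.modEq_zero_iff_dvd.mp (h2.trans (Int.modEq_zero_iff_dvd.mpr hd))

lemma natMod_modeq (m M : ℕ) : ((m % M : ℕ) : ℤ) ≡ (m : ℤ) [ZMOD (M:ℤ)] := by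
  have h : ((m % M : ℕ) : ℤ) = (m:ℤ) % (M:ℤ) := by push_cast; ring
  rw [h, Int.ModEq]
  exact Int.emod_emod_of_dvd _ dvd_rfl

section Chunk2
variable (p : ℕ) [hp : Fact p.Prime]

lemma not_dvd_of_sol {a : ℤ} (ha : ¬ (p:ℤ) ∣ a) {n : ℤ} (h : (p:ℤ) ∣ n^2 - a) :
    ¬ (p:ℤ) ∣ n := by
  intro hn
  apply ha
  have h1 : (p:ℤ) ∣ n^2 := by rw [sq]; exact hn.mul_right n
  have := dvd_sub h1 h
  simpa using this

lemma not_dvd_two (hp2 : p ≠ 2) : ¬ (p:ℤ) ∣ 2 := by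
  intro h
  have h' : (p:ℕ) ∣ 2 := by exact_mod_cast h
  exact hp2 ((Nat.prime_dvd_prime_iff_eq hp.out Nat.prime_two).mp h')

lemma not_dvd_two_mul (hp2 : p ≠ 2) {n : ℤ} (hn : ¬ (p:ℤ) ∣ n) : ¬ (p:ℤ) ∣ 2 * n := by
  intro h
  rcases (Prime.dvd_mul (Nat.prime_iff_prime_int.mp hp.out)).mp h with h | h
  · exact not_dvd_two p hp2 h
  · exact hn h

lemma card_sols_one (hp2 : p ≠ 2) (a : ℤ) (haQR : legendreSym p a = 1) :
    (sols p a 1 p).card = 2 := by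
  classical
  have h2 := legendreSym.card_sqrts p hp2 a
  rw [haQR] at h2
  have hc : {x : ZMod p | x ^ 2 = (a : ZMod p)}.toFinset.card = 2 := by exact_mod_cast h2
  rw [← hc]
  apply Finset.card_bij (fun n _ => ((n : ℕ) : ZMod p))
  · intro n hn
    rw [mem_sols] at hn
    rw [Set.mem_toFinset, Set.mem_setOf_eq]
    have : (((n:ℤ)^2 - a : ℤ) : ZMod p) = 0 := by
      rw [ZMod.intCast_zmod_eq_zero_iff_dvd]
      simpa using hn.2
    push_cast at this
    linear_combination this
  · intro n₁ h₁ n₂ h₂ h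
    rw [mem_sols] at h₁ h₂
    have := congrArg ZMod.val h
    rwa [ZMod.val_natCast_of_lt h₁.1, ZMod.val_natCast_of_lt h₂.1] at this
  · intro x hx
    rw [Set.mem_toFinset, Set.mem_setOf_eq] at hx
    have hxv : ((x.val : ℕ) : ZMod p) = x := ZMod.natCast_rightInverse x
    refine ⟨x.val, ?_, hxv⟩
    rw [mem_sols]
    refine ⟨ZMod.val_lt x, ?_⟩
    rw [pow_one, ← ZMod.intCast_zmod_eq_zero_iff_dvd]
    push_cast
    rw [hxv, hx]
    ring

lemma card_sols_succ (hp2 : p ≠ 2) (a : ℤ) (ha : ¬ (p:ℤ) ∣ a) (j : ℕ) (hj : 1 ≤ j) :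
    (sols p a (j+1) (p^(j+1))).card = (sols p a j (p^j)).card := by
  classical
  have hppos : 0 < p := hp.out.pos
  have hpj : 0 < p ^ j := pow_pos hppos j
  apply Finset.card_bij (fun n _ => n % p^j)
  · intro n hn
    rw [mem_sols] at hn ⊢
    refine ⟨Nat.mod_lt n hpj, ?_⟩
    have hiff := dvd_sq_sub_congr (a := a) (natMod_modeq n (p^j))
    have h2 : ((p^j : ℕ):ℤ) ∣ ((n:ℕ):ℤ)^2 - a := by
      push_cast
      exact dvd_trans (pow_dvd_pow _ (Nat.le_succ j)) hn.2
    have h3 := hiff.mpr h2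
    push_cast at h3 ⊢
    exact h3
  · intro n₁ h₁ n₂ h₂ h
    rw [mem_sols] at h₁ h₂
    have hmod : ((n₁:ℤ)) ≡ (n₂:ℤ) [ZMOD ((p^j : ℕ):ℤ)] :=
      (natMod_modeq n₁ (p^j)).symm.trans (by rw [h]; exact natMod_modeq n₂ (p^j))
    have hd : ((p:ℤ))^j ∣ (n₁ : ℤ) - n₂ := by
      have := hmod.dvd
      push_cast at this
      exact dvd_sub_comm.mp this
    have hpd1 : (p:ℤ) ∣ (n₁:ℤ)^2 - a := dvd_trans (dvd_pow_self _ (Nat.succ_ne_zero j)) h₁.2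
    have hn1 : ¬ (p:ℤ) ∣ (n₁:ℤ) := not_dvd_of_sol p ha hpd1
    have hps : ¬ (p:ℤ) ∣ ((n₁ : ℤ) + n₂) := by
      intro hdvd
      have hdd : (p:ℤ) ∣ (n₁:ℤ) - n₂ :=
        dvd_trans (dvd_pow_self _ (Nat.one_le_iff_ne_zero.mp hj)) hd
      have h2n : (p:ℤ) ∣ 2 * n₁ := by
        have := dvd_add hdvd hdd
        rw [show (2:ℤ) * (n₁:ℤ) = (n₁:ℤ) + n₂ + ((n₁:ℤ) - n₂) by ring]; exact this
      exact not_dvd_two_mul p hp2 hn1 h2n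
    have hprod : ((p:ℤ))^(j+1) ∣ ((n₁:ℤ) - n₂) * ((n₁:ℤ) + n₂) := by
      have := dvd_sub h₁.2 h₂.2
      rw [show ((n₁:ℤ) - n₂) * ((n₁:ℤ) + n₂) = ((n₁:ℤ)^2 - a) - ((n₂:ℤ)^2 - a) by ring]; exact this
    have hcop : IsCoprime (((p:ℤ))^(j+1)) ((n₁:ℤ) + n₂) :=
      IsCoprime.pow_left (((Nat.prime_iff_prime_int.mp hp.out).coprime_iff_not_dvd).mpr hps)
    have hfin : ((p:ℤ))^(j+1) ∣ (n₁:ℤ) - n₂ := hcop.dvd_of_dvd_mul_right hprod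
    have hz : ((n₁:ℤ) : ZMod (p^(j+1))) = ((n₂:ℤ) : ZMod (p^(j+1))) := by
      rw [ZMod.intCast_eq_intCast_iff_dvd_sub]
      push_cast
      exact dvd_sub_comm.mp hfin
    push_cast at hz
    have := congrArg ZMod.val hz
    rwa [ZMod.val_natCast_of_lt h₁.1, ZMod.val_natCast_of_lt h₂.1] at this
  · intro m hm
    rw [mem_sols] at hm
    obtain ⟨hmlt, hmdvd⟩ := hm
    set c : ℤ := ((m:ℤ)^2 - a) / (p:ℤ)^j with hcdef
    have hceq : ((p:ℤ))^j * c = (m:ℤ)^2 - a := Int.mul_ediv_cancel' hmdvd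
    have hpm : ¬ (p:ℤ) ∣ (m:ℤ) :=
      not_dvd_of_sol p ha (dvd_trans (dvd_pow_self _ (Nat.one_le_iff_ne_zero.mp hj)) hmdvd)
    have h2m : ((2 * (m:ℤ) : ℤ) : ZMod p) ≠ 0 := by
      rw [Ne, ZMod.intCast_zmod_eq_zero_iff_dvd]
      exact not_dvd_two_mul p hp2 hpm
    set r : ℕ := ((-((c:ℤ) : ZMod p)) * (((2 * (m:ℤ) : ℤ) : ZMod p))⁻¹).val with hrdef
    have hrlt : r < p := ZMod.val_lt _
    have hru : ((r : ℕ) : ZMod p) = (-((c:ℤ) : ZMod p)) * (((2 * (m:ℤ) : ℤ) : ZMod p))⁻¹ :=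
      ZMod.natCast_rightInverse _
    have hkey : (p:ℤ) ∣ c + 2 * m * r := by
      rw [← ZMod.intCast_zmod_eq_zero_iff_dvd]
      push_cast
      push_cast at hru h2m
      rw [hru]
      have hmu : (2 * ((m:ℕ) : ZMod p)) ≠ 0 := h2m
      have := mul_inv_cancel₀ hmu
      linear_combination (-(((c:ℤ) : ZMod p))) * this
    refine ⟨m + p^j * r, ?_, ?_⟩
    · rw [mem_sols]
      constructor
      · have h1 : p^j * (1 + r) ≤ p^j * p := Nat.mul_le_mul_left _ (by omega)
        have h2 : p^j * (1 + r) = p^j + p^j * r := by ring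
        have h3 : p^(j+1) = p^j * p := pow_succ p j
        omega
      · have expand : ((m + p^j * r : ℕ) : ℤ)^2 - a
            = (p:ℤ)^j * (c + 2 * m * r + (p:ℤ)^j * r^2) := by
          push_cast
          linear_combination (-1 : ℤ) * hceq
        rw [expand, pow_succ]
        exact mul_dvd_mul_left _
          (dvd_add hkey (dvd_mul_of_dvd_left (dvd_pow_self _ (by omega)) _))
    · rw [Nat.add_mul_mod_self_left, Nat.mod_eq_of_lt hmlt]

lemma card_sols_pow (hp2 : p ≠ 2) (a : ℤ) (ha : ¬ (p:ℤ) ∣ a) (haQR : legendreSym p a = 1) :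
    ∀ j, 1 ≤ j → (sols p a j (p^j)).card = 2 := by
  intro j hj
  induction j with
  | zero => omega
  | succ k ih =>
    rcases Nat.eq_or_lt_of_le hj with h | h
    · have : k = 0 := by omega
      subst this
      simpa [pow_one] using card_sols_one p hp2 a haQR
    · have hk : 1 ≤ k := by omega
      rw [card_sols_succ p hp2 a ha k hk]
      exact ih hk

end Chunk2

open Finset

section Chunk3

lemma filter_range_mul {N M : ℕ} (hN : 0 < N) (P : ℕ → Prop) [DecidablePred P]
    (hP : ∀ n, P (n % N) ↔ P n) :
    ((Finset.range (N * M)).filter P).card = M * ((Finset.range N).filter P).card := by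
  classical
  have key : ((Finset.range (N * M)).filter P).card
      = ((Finset.range M) ×ˢ ((Finset.range N).filter P)).card := by
    apply Finset.card_bij (fun n _ => ((n / N : ℕ), (n % N : ℕ)))
    · intro n hn
      rw [Finset.mem_filter, Finset.mem_range] at hn
      rw [Finset.mem_product, Finset.mem_range, Finset.mem_filter, Finset.mem_range]
      exact ⟨(Nat.div_lt_iff_lt_mul hN).mpr (by rw [mul_comm] at hn; exact hn.1),
        Nat.mod_lt _ hN, (hP n).mpr hn.2⟩
    · intro n₁ h₁ n₂ h₂ h
      have e1 := Nat.mod_add_div n₁ N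
      have e2 := Nat.mod_add_div n₂ N
      have hd : n₁ / N = n₂ / N := congrArg Prod.fst h
      have hm : n₁ % N = n₂ % N := congrArg Prod.snd h
      rw [hd, hm] at e1
      omega
    · rintro ⟨q, m⟩ hqm
      rw [Finset.mem_product, Finset.mem_range, Finset.mem_filter, Finset.mem_range] at hqm
      have hmod : (m + N * q) % N = m := by
        rw [Nat.add_mul_mod_self_left, Nat.mod_eq_of_lt hqm.2.1]
      have hdiv : (m + N * q) / N = q := by
        rw [Nat.add_mul_div_left _ _ hN, Nat.div_eq_of_lt hqm.2.1, zero_add]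
      refine ⟨m + N * q, ?_, by rw [hmod, hdiv]⟩
      rw [Finset.mem_filter, Finset.mem_range]
      constructor
      · have hb : N * (q + 1) ≤ N * M := Nat.mul_le_mul_left _ (by omega)
        have h2 : N * (q+1) = N * q + N := by ring
        omega
      · exact (hP (m + N*q)).mp (by rw [hmod]; exact hqm.2.2)
  rw [key, Finset.card_product, Finset.card_range]

variable (p : ℕ) [hp : Fact p.Prime]

lemma legendre_congr {x y : ℤ} (h : x ≡ y [ZMOD (p:ℤ)]) :
    legendreSym p x = legendreSym p y := by
  rw [legendreSym.mod p x, legendreSym.mod p y, (h : x % (p:ℤ) = y % (p:ℤ))]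

lemma card_filter_legendre_linear (k0 c0 : ℤ) (hk0 : ¬ (p:ℤ) ∣ 2 * k0)
    (s : ℕ) (hs : 1 ≤ s) :
    ((Finset.range (p^s)).filter (fun m : ℕ => legendreSym p (c0 + 2*k0*(m:ℤ)) = 1)).card
      = p^(s-1) * (Finset.univ.filter (fun z : ZMod p => quadraticChar (ZMod p) z = 1)).card := by
  classical
  have hps : p^s = p * p^(s-1) := by
    rw [← pow_succ']; congr 1; omega
  rw [hps, filter_range_mul hp.out.pos _ (fun n => ?_)]
  · congr 1
    refine Finset.card_bij (fun m _ => ((c0 + 2*k0*(m:ℤ) : ℤ) : ZMod p)) ?_ ?_ ?_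
    · intro m hm
      rw [Finset.mem_filter, Finset.mem_range] at hm
      rw [Finset.mem_filter]
      exact ⟨Finset.mem_univ _, hm.2⟩
    · intro m₁ h₁ m₂ h₂ h
      rw [Finset.mem_filter, Finset.mem_range] at h₁ h₂
      have hne : ((2*k0 : ℤ) : ZMod p) ≠ 0 := by
        rw [Ne, ZMod.intCast_zmod_eq_zero_iff_dvd]; exact hk0
      have hmm : ((2*k0 : ℤ) : ZMod p) * ((m₁:ℕ) : ZMod p)
          = ((2*k0 : ℤ) : ZMod p) * ((m₂:ℕ) : ZMod p) := by
        push_cast at h ⊢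
        linear_combination h
      have := mul_left_cancel₀ hne hmm
      have := congrArg ZMod.val this
      rwa [ZMod.val_natCast_of_lt h₁.1, ZMod.val_natCast_of_lt h₂.1] at this
    · intro z hz
      rw [Finset.mem_filter] at hz
      have hne : ((2*k0 : ℤ) : ZMod p) ≠ 0 := by
        rw [Ne, ZMod.intCast_zmod_eq_zero_iff_dvd]; exact hk0
      set m : ℕ := ((z - (c0 : ZMod p)) * (((2*k0 : ℤ) : ZMod p))⁻¹).val with hm
      have hmv : ((m:ℕ) : ZMod p) = (z - (c0 : ZMod p)) * (((2*k0 : ℤ) : ZMod p))⁻¹ :=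
        ZMod.natCast_rightInverse _
      have hcast : ((c0 + 2*k0*(m:ℤ) : ℤ) : ZMod p) = z := by
        push_cast
        push_cast at hmv
        rw [hmv]
        have := mul_inv_cancel₀ hne
        push_cast at this
        linear_combination (z - (c0 : ZMod p)) * this
      refine ⟨m, ?_, hcast⟩
      rw [Finset.mem_filter, Finset.mem_range]
      refine ⟨ZMod.val_lt _, ?_⟩
      show quadraticChar (ZMod p) ((c0 + 2*k0*(m:ℤ) : ℤ) : ZMod p) = 1
      rw [hcast]
      exact hz.2
  · -- periodicity
    apply propext_iff.mp
    congr 1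
    apply legendre_congr
    have : ((n % p : ℕ) : ℤ) ≡ (n : ℤ) [ZMOD (p:ℤ)] := by
      have h : ((n % p : ℕ) : ℤ) = (n:ℤ) % (p:ℤ) := by push_cast; ring
      rw [h, Int.ModEq]
      exact Int.emod_emod_of_dvd _ dvd_rfl
    exact (this.mul_left (2*k0)).add_left c0

end Chunk3

section Chunk4
variable (p : ℕ) [hp : Fact p.Prime]

open scoped Classical in
noncomputable def strat (p : ℕ) [Fact p.Prime] (a : ℤ) (e t : ℕ) : Finset ℕ :=
  (Finset.range (p^t)).filter (fun n => ((p:ℤ))^e ∣ (n:ℤ)^2 - a ∧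
    legendreSym p (((n:ℤ)^2 - a) / (p:ℤ)^e) = 1)

lemma mem_strat {p : ℕ} [Fact p.Prime] {a : ℤ} {e t n : ℕ} :
    n ∈ strat p a e t ↔ n < p^t ∧ ((p:ℤ))^e ∣ (n:ℤ)^2 - a ∧
      legendreSym p (((n:ℤ)^2 - a) / (p:ℤ)^e) = 1 := by
  classical
  simp [strat, and_assoc]

lemma strat_expand {a : ℤ} {e : ℕ} (k0 m : ℕ) (c0 : ℤ)
    (hc0 : (p:ℤ)^e * c0 = (k0:ℤ)^2 - a) :
    ((k0 + p^e * m : ℕ):ℤ)^2 - a = (p:ℤ)^e * (c0 + 2*k0*m + (p:ℤ)^e * m^2) := by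
  push_cast
  linear_combination (-1 : ℤ) * hc0

lemma legendre_drop {c0 k0 : ℤ} {e : ℕ} (he : 1 ≤ e) (m : ℤ) :
    legendreSym p (c0 + 2*k0*m + (p:ℤ)^e * m^2) = legendreSym p (c0 + 2*k0*m) := by
  apply legendre_congr
  rw [Int.modEq_iff_dvd]
  rw [show (c0 + 2*k0*m) - (c0 + 2*k0*m + (p:ℤ)^e * m^2) = -((p:ℤ)^e * m^2) by ring]
  exact dvd_neg.mpr (dvd_mul_of_dvd_left (dvd_pow_self _ (by omega)) _)

lemma card_strat (hp2 : p ≠ 2) (a : ℤ) (ha : ¬ (p:ℤ) ∣ a) (haQR : legendreSym p a = 1)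
    (e t : ℕ) (he : 1 ≤ e) (het : e + 1 ≤ t) :
    (strat p a e t).card
      = 2 * (p^(t-e-1) * (Finset.univ.filter
          (fun z : ZMod p => quadraticChar (ZMod p) z = 1)).card) := by
  classical
  have hppos : 0 < p := hp.out.pos
  have hpe : 0 < p ^ e := pow_pos hppos e
  have hfib : ∀ x ∈ strat p a e t, x % p^e ∈ sols p a e (p^e) := by
    intro n hn
    rw [mem_strat] at hn
    rw [mem_sols]
    refine ⟨Nat.mod_lt _ hpe, ?_⟩
    have hiff := dvd_sq_sub_congr (a := a) (natMod_modeq n (p^e))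
    have h2 : ((p^e : ℕ):ℤ) ∣ ((n:ℕ):ℤ)^2 - a := by push_cast; exact hn.2.1
    have h3 := hiff.mpr h2
    push_cast at h3 ⊢
    exact h3
  have hcardsols : (sols p a e (p^e)).card = 2 := card_sols_pow p hp2 a ha haQR e he
  have hfibcard : ∀ k0 ∈ sols p a e (p^e),
      ((strat p a e t).filter (fun x => x % p^e = k0)).card
        = p^(t-e-1) * (Finset.univ.filter
            (fun z : ZMod p => quadraticChar (ZMod p) z = 1)).card := by
    intro k0 hk0
    rw [mem_sols] at hk0
    obtain ⟨hk0lt, hk0dvd⟩ := hk0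
    set c0 : ℤ := ((k0:ℤ)^2 - a) / (p:ℤ)^e with hc0def
    have hc0 : (p:ℤ)^e * c0 = (k0:ℤ)^2 - a := Int.mul_ediv_cancel' hk0dvd
    have hpk0 : ¬ (p:ℤ) ∣ (k0:ℤ) :=
      not_dvd_of_sol p ha (dvd_trans (dvd_pow_self _ (by omega)) hk0dvd)
    have h2k0 : ¬ (p:ℤ) ∣ 2 * (k0:ℤ) := not_dvd_two_mul p hp2 hpk0
    have hpne : ((p:ℤ))^e ≠ 0 := pow_ne_zero _ (by exact_mod_cast hppos.ne')
    -- the div computation for n = k0 + p^e * m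
    have hdivc : ∀ m : ℕ, (((k0 + p^e * m : ℕ):ℤ)^2 - a) / (p:ℤ)^e
        = c0 + 2*k0*m + (p:ℤ)^e * m^2 := by
      intro m
      rw [strat_expand p k0 m c0 hc0]
      exact Int.mul_ediv_cancel_left _ hpne
    have key : ((strat p a e t).filter (fun x => x % p^e = k0)).card
        = ((Finset.range (p^(t-e))).filter
            (fun m : ℕ => legendreSym p (c0 + 2*(k0:ℤ)*(m:ℤ)) = 1)).card := by
      refine Finset.card_bij (fun n _ => n / p^e) ?_ ?_ ?_
      · intro n hn
        rw [Finset.mem_filter] at hn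
        obtain ⟨hns, hnmod⟩ := hn
        rw [mem_strat] at hns
        have hrep : k0 + p^e * (n / p^e) = n := by
          have := Nat.mod_add_div n (p^e); omega
        rw [Finset.mem_filter, Finset.mem_range]
        constructor
        · have hlt : n < p^(t-e) * p^e := by
            rw [← pow_add, show t-e+e = t by omega]
            exact hns.1
          exact (Nat.div_lt_iff_lt_mul hpe).mpr hlt
        · have := hns.2.2
          have hrep' : (n:ℤ) = ((k0 + p^e * (n / p^e) : ℕ) : ℤ) := by
            exact_mod_cast congrArg (Nat.cast : ℕ → ℤ) hrep.symm
          rw [hrep', hdivc (n / p^e)] at this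
          rwa [legendre_drop p he] at this
      · intro n₁ h₁ n₂ h₂ h
        have h : n₁ / p^e = n₂ / p^e := h
        rw [Finset.mem_filter] at h₁ h₂
        have e1 := Nat.mod_add_div n₁ (p^e)
        have e2 := Nat.mod_add_div n₂ (p^e)
        rw [h₁.2, h] at e1
        rw [h₂.2] at e2
        omega
      · intro m hm
        rw [Finset.mem_filter, Finset.mem_range] at hm
        have hmod : (k0 + p^e * m) % p^e = k0 := by
          rw [Nat.add_mul_mod_self_left, Nat.mod_eq_of_lt hk0lt]
        have hdiv : (k0 + p^e * m) / p^e = m := by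
          rw [Nat.add_mul_div_left _ _ hpe, Nat.div_eq_of_lt hk0lt, zero_add]
        refine ⟨k0 + p^e * m, ?_, hdiv⟩
        rw [Finset.mem_filter, mem_strat]
        refine ⟨⟨?_, ?_, ?_⟩, hmod⟩
        · have h1 : p^e * (1 + m) ≤ p^e * p^(t-e) := Nat.mul_le_mul_left _ (by omega)
          have h2 : p^e * (1 + m) = p^e + p^e * m := by ring
          have h3 : p^e * p^(t-e) = p^t := by
            rw [← pow_add]; congr 1; omega
          omega
        · rw [strat_expand p k0 m c0 hc0]
          exact ⟨_, rfl⟩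
        · rw [hdivc m, legendre_drop p he]
          exact hm.2
    rw [key, card_filter_legendre_linear p (k0:ℤ) c0 h2k0 (t-e) (by omega)]
  rw [Finset.card_eq_sum_card_fiberwise hfib, Finset.sum_congr rfl hfibcard,
    Finset.sum_const, hcardsols, smul_eq_mul]


end Chunk4


section Chunk5
variable (p : ℕ) [hp : Fact p.Prime]

lemma dvd_x_of {d x : ℤ} (hd : (p:ℤ) ∣ d) (hxd : (p:ℤ) ∣ x^2 - d) : (p:ℤ) ∣ x := by
  have h2 : (p:ℤ) ∣ x^2 := by
    have := dvd_add hxd hd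
    simpa using this
  exact (Nat.prime_iff_prime_int.mp hp.out).dvd_of_dvd_pow h2

lemma key_val (hp2 : p ≠ 2) :
    ∀ e : ℕ, ∀ (c x : ℤ) (t : ℕ), ¬ (p:ℤ) ∣ c → e < t →
      (p:ℤ)^t ∣ x^2 - (p:ℤ)^e * c → Even e ∧ legendreSym p c = 1 := by
  intro e
  induction e using Nat.strong_induction_on with
  | _ e ih =>
    match e, ih with
    | 0, _ =>
      intro c x t hc het hdvd
      refine ⟨Even.zero, ?_⟩
      have hpd : (p:ℤ) ∣ x^2 - c := by
        have h := dvd_trans (dvd_pow_self (p:ℤ) (by omega : t ≠ 0)) hdvd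
        rw [pow_zero, one_mul] at h
        exact h
      have hpx : ¬ (p:ℤ) ∣ x := by
        intro hx
        apply hc
        have h2 : (p:ℤ) ∣ x^2 := by rw [sq]; exact hx.mul_right x
        have := dvd_sub h2 hpd
        simpa using this
      have hcong : legendreSym p c = legendreSym p (x^2) := by
        apply legendre_congr
        rw [Int.modEq_iff_dvd]
        exact hpd
      rw [hcong]
      exact legendreSym.sq_one' p (by
        rw [Ne, ZMod.intCast_zmod_eq_zero_iff_dvd]; exact hpx)
    | 1, _ =>
      intro c x t hc het hdvd
      exfalso
      have hpd : (p:ℤ) ∣ (p:ℤ)^1 * c := by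
        rw [pow_one]; exact Dvd.dvd.mul_right dvd_rfl c
      have hpx : (p:ℤ) ∣ x := dvd_x_of p hpd
        (dvd_trans (dvd_pow_self (p:ℤ) (by omega : t ≠ 0)) hdvd)
      obtain ⟨x1, rfl⟩ := hpx
      apply hc
      have h2 : (p:ℤ)^2 ∣ ((p:ℤ)*x1)^2 - (p:ℤ)^1 * c := dvd_trans (pow_dvd_pow _ (by omega)) hdvd
      have h3 : (p:ℤ)^2 ∣ ((p:ℤ)*x1)^2 := by
        rw [mul_pow]; exact Dvd.dvd.mul_right dvd_rfl _
      have h4 : (p:ℤ)^2 ∣ (p:ℤ)^1 * c := by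
        have h := dvd_sub h3 h2
        simpa using h
      rw [pow_two, pow_one] at h4
      exact (mul_dvd_mul_iff_left
        (show (p:ℤ) ≠ 0 by exact_mod_cast hp.out.pos.ne')).mp h4
    | (e'+2), ih =>
      intro c x t hc het hdvd
      have hpd : (p:ℤ) ∣ (p:ℤ)^(e'+2) * c :=
        Dvd.dvd.mul_right (dvd_pow_self _ (by omega)) c
      have hpx : (p:ℤ) ∣ x := dvd_x_of p hpd
        (dvd_trans (dvd_pow_self (p:ℤ) (by omega : t ≠ 0)) hdvd)
      obtain ⟨x1, rfl⟩ := hpx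
      have hfac : ((p:ℤ)*x1)^2 - (p:ℤ)^(e'+2) * c = (p:ℤ)^2 * (x1^2 - (p:ℤ)^e' * c) := by
        ring
      rw [hfac] at hdvd
      have ht2 : t = 2 + (t - 2) := by omega
      rw [ht2, pow_add] at hdvd
      have hcancel : (p:ℤ)^(t-2) ∣ x1^2 - (p:ℤ)^e' * c := by
        have hne : ((p:ℤ))^2 ≠ 0 := pow_ne_zero _ (by exact_mod_cast hp.out.pos.ne')
        exact (mul_dvd_mul_iff_left hne).mp hdvd
      obtain ⟨he, hl⟩ := ih e' (by omega) c x1 (t-2) hc (by omega) hcancel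
      exact ⟨by rcases he with ⟨f, hf⟩; exact ⟨f+1, by omega⟩, hl⟩

end Chunk5

section Chunk6
variable (p : ℕ) [hp : Fact p.Prime]

open scoped Classical in
noncomputable def Sfin (p : ℕ) (a : ℤ) (t : ℕ) : Finset ℕ :=
  (Finset.range (p^t)).filter (fun n => ((p:ℤ) ∣ (n:ℤ)^2 - a) ∧
    IsSquareMod ((n:ℤ)^2 - a) (p^t))

lemma mem_Sfin {p : ℕ} {a : ℤ} {t n : ℕ} :
    n ∈ Sfin p a t ↔ n < p^t ∧ ((p:ℤ) ∣ (n:ℤ)^2 - a) ∧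
      IsSquareMod ((n:ℤ)^2 - a) (p^t) := by
  classical
  simp [Sfin, and_assoc]

lemma strat_excl {a : ℤ} {e t' n : ℕ} (h : (p:ℤ)^(e+1) ∣ (n:ℤ)^2 - a) :
    n ∉ strat p a e t' := by
  intro hn
  rw [mem_strat] at hn
  obtain ⟨w, hw⟩ := h
  have hpne : ((p:ℤ))^e ≠ 0 := pow_ne_zero _ (by exact_mod_cast hp.out.pos.ne')
  have hc : ((n:ℤ)^2 - a)/(p:ℤ)^e = (p:ℤ) * w := by
    rw [hw, show (p:ℤ)^(e+1)*w = (p:ℤ)^e*((p:ℤ)*w) by ring]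
    exact Int.mul_ediv_cancel_left _ hpne
  have h0 : legendreSym p ((p:ℤ) * w) = 0 := by
    rw [legendreSym.eq_zero_iff]
    push_cast
    simp [ZMod.natCast_self]
  rw [hc, h0] at hn
  exact absurd hn.2.2 (by norm_num)

lemma Sfin_eq (hp2 : p ≠ 2) (a : ℤ) (ha : ¬ (p:ℤ) ∣ a) (haQR : legendreSym p a = 1)
    (t : ℕ) (ht : 1 ≤ t) :
    Sfin p a t = sols p a t (p^t)
      ∪ ((Finset.Ico 1 t).filter (fun e => Even e)).biUnion (fun e => strat p a e t) := by
  classical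
  ext n
  rw [Finset.mem_union, Finset.mem_biUnion, mem_Sfin, mem_sols]
  constructor
  · rintro ⟨hlt, h1, x, hx⟩
    rw [Int.ModEq] at hx
    have hx' : (p:ℤ)^t ∣ ((n:ℤ)^2 - a) - x^2 := by
      have h := (Int.emod_emod_of_dvd _ dvd_rfl).symm ▸ hx
      have h2 : x^2 ≡ (n:ℤ)^2 - a [ZMOD ((p^t : ℕ):ℤ)] := hx
      have := h2.dvd
      push_cast at this
      exact this
    by_cases hT : (p:ℤ)^t ∣ (n:ℤ)^2 - a
    · exact Or.inl ⟨hlt, hT⟩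
    · right
      set e := Nat.findGreatest (fun e => (p:ℤ)^e ∣ (n:ℤ)^2 - a) t with hedef
      have hP1 : (fun e => (p:ℤ)^e ∣ (n:ℤ)^2 - a) 1 := by simpa using h1
      have he1 : 1 ≤ e := Nat.le_findGreatest ht hP1
      have heT : e ≤ t := Nat.findGreatest_le t
      have hdvde : (p:ℤ)^e ∣ (n:ℤ)^2 - a := by
        have h := Nat.findGreatest_spec (P := fun e => (p:ℤ)^e ∣ (n:ℤ)^2 - a) ht hP1
        simpa [← hedef] using h
      have helt : e < t := by
        rcases Nat.lt_or_ge e t with h | h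
        · exact h
        · have het' : e = t := by omega
          rw [het'] at hdvde
          exact absurd hdvde hT
      have hnot : ¬ (p:ℤ)^(e+1) ∣ (n:ℤ)^2 - a := by
        have := Nat.findGreatest_is_greatest (by omega : e < e+1) (by omega : e+1 ≤ t)
        simpa using this
      set c : ℤ := ((n:ℤ)^2 - a) / (p:ℤ)^e with hcdef
      have hceq : (p:ℤ)^e * c = (n:ℤ)^2 - a := Int.mul_ediv_cancel' hdvde
      have hpc : ¬ (p:ℤ) ∣ c := by
        intro hdc
        obtain ⟨w, hw⟩ := hdc
        apply hnot
        rw [← hceq, hw, pow_succ]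
        exact ⟨w, by ring⟩
      have hxc : (p:ℤ)^t ∣ x^2 - (p:ℤ)^e * c := by
        rw [hceq]
        have := dvd_neg.mpr hx'
        rw [neg_sub] at this
        exact this
      obtain ⟨heven, hleg⟩ := key_val p hp2 e c x t hpc helt hxc
      refine ⟨e, ?_, ?_⟩
      · rw [Finset.mem_filter, Finset.mem_Ico]
        exact ⟨⟨he1, helt⟩, heven⟩
      · rw [mem_strat]
        exact ⟨hlt, hdvde, hleg⟩
  · rintro (⟨hlt, hT⟩ | ⟨e, he, hn⟩)
    · refine ⟨hlt, dvd_trans (dvd_pow_self _ (by omega : t ≠ 0)) hT, 0, ?_⟩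
      rw [Int.modEq_iff_dvd]
      push_cast
      simpa using hT
    · rw [Finset.mem_filter, Finset.mem_Ico] at he
      obtain ⟨⟨he1, helt⟩, hevn⟩ := he
      rw [mem_strat] at hn
      obtain ⟨hlt, hdvde, hleg⟩ := hn
      set c : ℤ := ((n:ℤ)^2 - a) / (p:ℤ)^e with hcdef
      have hceq : (p:ℤ)^e * c = (n:ℤ)^2 - a := Int.mul_ediv_cancel' hdvde
      have hpc : ¬ (p:ℤ) ∣ c := by
        intro hdc
        have h0 : legendreSym p c = 0 := by
          rw [legendreSym.eq_zero_iff, ZMod.intCast_zmod_eq_zero_iff_dvd]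
          exact hdc
        rw [h0] at hleg
        norm_num at hleg
      have hcard := card_sols_pow p hp2 c hpc hleg (t-e) (by omega)
      have hne : (sols p c (t-e) (p^(t-e))).Nonempty := by
        rw [← Finset.card_pos, hcard]; norm_num
      obtain ⟨w, hw⟩ := hne
      rw [mem_sols] at hw
      obtain ⟨f, hf⟩ := hevn
      refine ⟨hlt, dvd_trans (dvd_pow_self _ (by omega : e ≠ 0)) hdvde, (p:ℤ)^f * w, ?_⟩
      rw [Int.modEq_iff_dvd]
      have hxx : ((n:ℤ)^2 - a) - ((p:ℤ)^f * w)^2 = (p:ℤ)^e * (c - (w:ℤ)^2) := by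
        rw [← hceq, hf]
        ring
      rw [hxx]
      have hsplit : ((p^t : ℕ) : ℤ) = (p:ℤ)^e * (p:ℤ)^(t-e) := by
        push_cast
        rw [← pow_add, show e + (t-e) = t by omega]
      rw [hsplit]
      exact mul_dvd_mul_left _ (dvd_sub_comm.mp hw.2)

lemma card_Sfin (hp2 : p ≠ 2) (a : ℤ) (ha : ¬ (p:ℤ) ∣ a) (haQR : legendreSym p a = 1)
    (t : ℕ) (ht : 1 ≤ t) :
    (Sfin p a t).card
      = 2 + ∑ e ∈ (Finset.Ico 1 t).filter (fun e => Even e), p^(t-e-1) * (p-1) := by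
  classical
  rw [Sfin_eq p hp2 a ha haQR t ht]
  have hdisj : Disjoint (sols p a t (p^t))
      (((Finset.Ico 1 t).filter (fun e => Even e)).biUnion (fun e => strat p a e t)) := by
    rw [Finset.disjoint_biUnion_right]
    intro e he
    rw [Finset.mem_filter, Finset.mem_Ico] at he
    rw [Finset.disjoint_left]
    intro n hn
    rw [mem_sols] at hn
    exact strat_excl p (dvd_trans (pow_dvd_pow _ (by omega : e + 1 ≤ t)) hn.2)
  rw [Finset.card_union_of_disjoint hdisj,
    card_sols_pow p hp2 a ha haQR t ht,
    Finset.card_biUnion ?_]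
  · congr 1
    apply Finset.sum_congr rfl
    intro e he
    rw [Finset.mem_filter, Finset.mem_Ico] at he
    rw [card_strat p hp2 a ha haQR e t (by omega) (by omega)]
    rw [show 2 * (p^(t-e-1) * (Finset.univ.filter
        (fun z : ZMod p => quadraticChar (ZMod p) z = 1)).card)
      = p^(t-e-1) * (2 * (Finset.univ.filter
        (fun z : ZMod p => quadraticChar (ZMod p) z = 1)).card) by ring]
    rw [card_QR p hp2]
  · intro e he e' he' hne
    rw [Finset.mem_coe, Finset.mem_filter, Finset.mem_Ico] at he he'
    rw [Function.onFun, Finset.disjoint_left]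
    intro n hn hn'
    rcases Nat.lt_or_ge e e' with h | h
    · have hd : (p:ℤ)^(e+1) ∣ (n:ℤ)^2 - a := by
        rw [mem_strat] at hn'
        exact dvd_trans (pow_dvd_pow _ (by omega)) hn'.2.1
      exact strat_excl p hd hn
    · have hlt : e' < e := by omega
      have hd : (p:ℤ)^(e'+1) ∣ (n:ℤ)^2 - a := by
        rw [mem_strat] at hn
        exact dvd_trans (pow_dvd_pow _ (by omega)) hn.2.1
      exact strat_excl p hd hn'

end Chunk6


section Chunk7
variable (p : ℕ) [hp : Fact p.Prime]

lemma S2''_eq (a : ℤ) (t : ℕ) (ht : 1 ≤ t) :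
    S2'' a p t = ↑((Sfin p a t).image (fun n : ℕ => ((n : ℕ) : ZMod (p^t)))) := by
  have hNpos : 0 < p^t := pow_pos hp.out.pos t
  ext s
  rw [Finset.coe_image, Set.mem_image]
  constructor
  · rintro ⟨k, rfl, hsq, hdvd⟩
    set n : ℕ := (k % ((p^t : ℕ) : ℤ)).toNat with hndef
    have hN0 : ((p^t : ℕ) : ℤ) ≠ 0 := by exact_mod_cast hNpos.ne'
    have hmod0 : 0 ≤ k % ((p^t : ℕ) : ℤ) := Int.emod_nonneg k hN0
    have hn : (n : ℤ) = k % ((p^t : ℕ) : ℤ) := Int.toNat_of_nonneg hmod0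
    have hlt : n < p^t := by
      have := Int.emod_lt_of_pos k (by exact_mod_cast hNpos : (0:ℤ) < ((p^t : ℕ) : ℤ))
      omega
    have hcong : (n : ℤ) ≡ k [ZMOD ((p^t : ℕ) : ℤ)] := by
      rw [hn, Int.ModEq]
      exact Int.emod_emod_of_dvd _ dvd_rfl
    have hcong2 : ((n:ℤ)^2 - a) ≡ (k^2 - a) [ZMOD ((p^t : ℕ) : ℤ)] :=
      (hcong.pow 2).sub_right a
    refine ⟨n, ?_, ?_⟩
    · rw [Finset.mem_coe, mem_Sfin]
      refine ⟨hlt, ?_, ?_⟩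
      · have hpN : (p:ℤ) ∣ ((p^t : ℕ) : ℤ) := by
          push_cast
          exact dvd_pow_self _ (by omega : t ≠ 0)
        exact (dvd_sq_sub_congr (hcong.of_dvd hpN)).mpr hdvd
      · obtain ⟨x, hx⟩ := hsq
        exact ⟨x, hx.trans hcong2.symm⟩
    · have : ((n:ℤ) : ZMod (p^t)) = (k : ZMod (p^t)) :=
        (ZMod.intCast_eq_intCast_iff _ _ _).mpr hcong
      push_cast at this
      exact this
  · rintro ⟨n, hn, hcast⟩
    rw [Finset.mem_coe, mem_Sfin] at hn
    refine ⟨(n:ℤ), ?_, hn.2.2, hn.2.1⟩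
    rw [← hcast]
    push_cast
    rfl

lemma ncard_S2'' (a : ℤ) (t : ℕ) (ht : 1 ≤ t) :
    (S2'' a p t).ncard = (Sfin p a t).card := by
  haveI : NeZero (p^t) := ⟨(pow_pos hp.out.pos t).ne'⟩
  rw [S2''_eq p a t ht, Set.ncard_coe_finset]
  apply Finset.card_image_of_injOn
  intro n hn m hm h
  rw [Finset.mem_coe, mem_Sfin] at hn hm
  have := congrArg ZMod.val h
  rwa [ZMod.val_natCast_of_lt hn.1, ZMod.val_natCast_of_lt hm.1] at this

lemma E_succ2 (s : ℕ) (hs : 1 ≤ s) :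
    (Finset.Ico 1 (s+2)).filter (fun e => Even e)
      = insert 2 (((Finset.Ico 1 s).filter (fun e => Even e)).image (· + 2)) := by
  ext x
  simp only [Finset.mem_filter, Finset.mem_Ico, Finset.mem_insert, Finset.mem_image,
    Nat.even_iff]
  constructor
  · rintro ⟨⟨h1, h2⟩, he⟩
    by_cases hx2 : x = 2
    · exact Or.inl hx2
    · exact Or.inr ⟨x - 2, ⟨⟨by omega, by omega⟩, by omega⟩, by omega⟩
  · rintro (rfl | ⟨e, ⟨⟨he1, he2⟩, hee⟩, rfl⟩)
    · exact ⟨⟨by omega, by omega⟩, by omega⟩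
    · exact ⟨⟨by omega, by omega⟩, by omega⟩

lemma sum_formula (p : ℕ) (hp2 : 2 ≤ p) : ∀ t : ℕ, 1 ≤ t →
    ((2 + ∑ e ∈ (Finset.Ico 1 t).filter (fun e => Even e), p^(t-e-1) * (p-1) : ℕ) : ℚ)
      = (p:ℚ)^(t-1)/((p:ℚ)+1) + 3/2 + (-1:ℚ)^(t-1) * ((p:ℚ)-1)/(2*((p:ℚ)+1)) := by
  classical
  have hp1 : (0:ℚ) < (p:ℚ) + 1 := by positivity
  have hpc : ((p - 1 : ℕ) : ℚ) = (p:ℚ) - 1 := by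
    rw [Nat.cast_sub (by omega)]; norm_num
  intro t
  induction t using Nat.strong_induction_on with
  | _ t ih =>
    intro ht
    match t, ih with
    | 1, _ =>
      rw [show (Finset.Ico 1 1) = ∅ by simp]
      simp only [Finset.filter_empty, Finset.sum_empty, add_zero]
      rw [show (1:ℕ) - 1 = 0 from rfl]
      norm_num
      field_simp
      ring
    | 2, _ =>
      rw [show ((Finset.Ico 1 2).filter (fun e => Even e)) = ∅ by decide]
      simp only [Finset.sum_empty, add_zero]
      rw [show (2:ℕ) - 1 = 1 from rfl]
      norm_num
      field_simp
      ring
    | (s+3), ih =>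
      have hs : 1 ≤ s + 1 := by omega
      have hrec := ih (s+1) (by omega) hs
      rw [show s + 3 = (s+1) + 2 from rfl, E_succ2 (s+1) hs]
      have h2notmem : 2 ∉ (((Finset.Ico 1 (s+1)).filter (fun e => Even e)).image (· + 2)) := by
        simp only [Finset.mem_image, Finset.mem_filter, Finset.mem_Ico]
        rintro ⟨e, ⟨⟨he1, _⟩, _⟩, hee⟩
        omega
      rw [Finset.sum_insert h2notmem,
        Finset.sum_image (by intro x _ y _ h; simp only at h; omega)]
      have hterm : ∀ e ∈ (Finset.Ico 1 (s+1)).filter (fun e => Even e),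
          p^((s+1)+2-(e+2)-1) * (p-1) = p^((s+1)-e-1) * (p-1) := by
        intro e _
        congr 2
        omega
      rw [Finset.sum_congr rfl hterm]
      have hexp2 : (s+1)+2-2-1 = s := by omega
      rw [hexp2]
      push_cast [hpc]
      push_cast [hpc] at hrec
      have hlhs : (2:ℚ) + ((p:ℚ)^s * ((p:ℚ)-1)
            + ∑ e ∈ (Finset.Ico 1 (s+1)).filter (fun e => Even e),
                (p:ℚ)^((s+1)-e-1) * ((p:ℚ)-1))
          = (2 + ∑ e ∈ (Finset.Ico 1 (s+1)).filter (fun e => Even e),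
                (p:ℚ)^((s+1)-e-1) * ((p:ℚ)-1)) + (p:ℚ)^s * ((p:ℚ)-1) := by ring
      rw [hlhs, hrec]
      have hp2' : (p:ℚ)^(s+2) = (p:ℚ)^s * (p:ℚ)^2 := by rw [← pow_add]
      have hm2 : (-1:ℚ)^(s+2) = (-1:ℚ)^s := by
        rw [pow_add]; norm_num
      rw [hp2', hm2]
      field_simp
      ring

end Chunk7


theorem stmt8 (p : ℕ) [hp : Fact p.Prime] (hp2 : p ≠ 2) (t : ℕ) (ht : 1 ≤ t)
    (a : ℤ) (ha : IsCoprime a (p : ℤ)) :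
    (legendreSym p a = -1 → (S2'' a p t).ncard = 0) ∧
    (legendreSym p a = 1 →
      ((S2'' a p t).ncard : ℚ) = (p : ℚ) ^ (t - 1) / ((p : ℚ) + 1) + 3 / 2 +
        (-1 : ℚ) ^ (t - 1) * ((p : ℚ) - 1) / (2 * ((p : ℚ) + 1))) := by
  constructor
  · intro hneg
    have hempty : S2'' a p t = ∅ := by
      ext s
      simp only [S2'', Set.mem_setOf_eq, Set.mem_empty_iff_false, iff_false]
      rintro ⟨k, rfl, hsq, hdvd⟩
      have h0 : ((k^2 - a : ℤ) : ZMod p) = 0 := (ZMod.intCast_zmod_eq_zero_iff_dvd _ p).mpr hdvd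
      push_cast at h0
      have hsquare : IsSquare ((a : ZMod p)) := by
        refine ⟨(k : ZMod p), ?_⟩
        have : (a : ZMod p) = (k:ZMod p)^2 := by linear_combination -h0
        rw [this, sq]
      rw [legendreSym.eq_neg_one_iff] at hneg
      exact hneg hsquare
    rw [hempty, Set.ncard_empty]
  · intro hpos
    have ha' : ¬ (p:ℤ) ∣ a := by
      intro hd
      have h0 : legendreSym p a = 0 :=
        (legendreSym.eq_zero_iff p a).mpr ((ZMod.intCast_zmod_eq_zero_iff_dvd a p).mpr hd)
      rw [hpos] at h0
      norm_num at h0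
    rw [ncard_S2'' p a t ht, card_Sfin p hp2 a ha' hpos t ht]
    exact sum_formula p hp.out.two_le t ht
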